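/- Fix an integer k ≥ 2. For every limit ordinal α, hNil_k(α) = 2^α (ordinal exponentiation); i.e. the ordinal height of the set of finite k-branching trees with strictly decreasing ordinal labels < α, under the one-step extension relation, is 2^α. -/

import Mathlib

open Ordinal Order Set
/-- Natural (Hessenberg) addition, as `Ordinal.nadd` was defined in Mathlib (Dec 2024). -/
noncomputable def Ordinal.nadd (a b : Ordinal.{u}) : Ordinal.{u} :=
  max (⨆ x : Set.Iio a, Order.succ (Ordinal.nadd x.1 b))
    (⨆ x : Set.Iio b, Order.succ (Ordinal.nadd a x.1))
termination_by (a, b)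
decreasing_by
  · exact Prod.Lex.left _ _ x.2
  · exact Prod.Lex.right _ x.2

/-- `nmulNat γ k` is the `k`-fold natural (Hessenberg) sum `γ ⊕ ⋯ ⊕ γ`. -/
noncomputable def nmulNat (γ : Ordinal) : ℕ → Ordinal
  | 0 => 0
  | n + 1 => Ordinal.nadd (nmulNat γ n) γ

/-- `hNil k α = sup { hNil k β * k + 1 : β < α }`, where `* k` is the `k`-fold natural sum. -/
noncomputable def hNil (k : ℕ) (α : Ordinal) : Ordinal :=
  ⨆ β : Set.Iio α, nmulNat (hNil k β.1) k + 1
termination_by α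
decreasing_by exact β.2

infixl:65 " ♯ " => Ordinal.nadd

namespace NaddAux

theorem nadd_def (a b : Ordinal) :
    a ♯ b = max (⨆ x : Iio a, succ (x.1 ♯ b)) (⨆ x : Iio b, succ (a ♯ x.1)) := by
  rw [Ordinal.nadd]

theorem lt_nadd_iff {a b c : Ordinal} :
    a < b ♯ c ↔ (∃ b' < b, a ≤ b' ♯ c) ∨ ∃ c' < c, a ≤ b ♯ c' := by
  rw [nadd_def, lt_max_iff, Ordinal.lt_iSup_iff, Ordinal.lt_iSup_iff]
  simp only [Subtype.exists, mem_Iio, Order.lt_succ_iff, exists_prop]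

theorem nadd_le_iff {a b c : Ordinal} :
    b ♯ c ≤ a ↔ (∀ b' < b, b' ♯ c < a) ∧ ∀ c' < c, b ♯ c' < a := by
  rw [nadd_def, max_le_iff, Ordinal.iSup_le_iff, Ordinal.iSup_le_iff]
  simp only [Subtype.forall, mem_Iio, Order.succ_le_iff]

theorem nadd_lt_nadd_left {b c : Ordinal} (h : b < c) (a : Ordinal) : a ♯ b < a ♯ c :=
  lt_nadd_iff.2 (Or.inr ⟨b, h, le_rfl⟩)

theorem nadd_lt_nadd_right {b c : Ordinal} (h : b < c) (a : Ordinal) : b ♯ a < c ♯ a :=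
  lt_nadd_iff.2 (Or.inl ⟨b, h, le_rfl⟩)

theorem nadd_le_nadd_left {b c : Ordinal} (h : b ≤ c) (a : Ordinal) : a ♯ b ≤ a ♯ c := by
  rcases h.lt_or_eq with h | rfl
  · exact (nadd_lt_nadd_left h a).le
  · exact le_rfl

theorem nadd_le_nadd_right {b c : Ordinal} (h : b ≤ c) (a : Ordinal) : b ♯ a ≤ c ♯ a := by
  rcases h.lt_or_eq with h | rfl
  · exact (nadd_lt_nadd_right h a).le
  · exact le_rfl

theorem nadd_le_nadd {a b c d : Ordinal} (h1 : a ≤ b) (h2 : c ≤ d) : a ♯ c ≤ b ♯ d :=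
  (nadd_le_nadd_right h1 c).trans (nadd_le_nadd_left h2 b)

theorem le_self_nadd {a b : Ordinal} : a ≤ a ♯ b := by
  induction a using WellFoundedLT.induction with
  | _ a IH =>
    rw [← not_lt]
    intro hlt
    exact lt_irrefl _ ((IH _ hlt).trans_lt (nadd_lt_nadd_right hlt b))

theorem nadd_comm (a b : Ordinal) : a ♯ b = b ♯ a := by
  induction a using WellFoundedLT.induction generalizing b with
  | _ a IHa =>
  induction b using WellFoundedLT.induction with
  | _ b IHb =>
  apply le_antisymm
  · rw [nadd_le_iff]; constructor
    · intro a' ha'; rw [IHa a' ha' b]; exact nadd_lt_nadd_left ha' b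
    · intro b' hb'; rw [IHb b' hb']; exact nadd_lt_nadd_right hb' a
  · rw [nadd_le_iff]; constructor
    · intro b' hb'; rw [← IHb b' hb']; exact nadd_lt_nadd_left hb' a
    · intro a' ha'; rw [← IHa a' ha' b]; exact nadd_lt_nadd_right ha' b

@[simp]
theorem nadd_zero (a : Ordinal) : a ♯ 0 = a := by
  induction a using WellFoundedLT.induction with
  | _ a IH =>
  refine le_antisymm (nadd_le_iff.2 ⟨fun a' h => by rw [IH a' h]; exact h,
    fun c h => absurd h not_lt_zero⟩) le_self_nadd

@[simp]
theorem zero_nadd (a : Ordinal) : 0 ♯ a = a := by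
  rw [nadd_comm, nadd_zero]

theorem nadd_assoc (a b c : Ordinal) : a ♯ b ♯ c = a ♯ (b ♯ c) := by
  induction a using WellFoundedLT.induction generalizing b c with
  | _ a IHa =>
  induction b using WellFoundedLT.induction generalizing c with
  | _ b IHb =>
  induction c using WellFoundedLT.induction with
  | _ c IHc =>
  apply le_antisymm
  · rw [nadd_le_iff]; constructor
    · intro d hd
      rcases lt_nadd_iff.1 hd with ⟨a', ha', hd'⟩ | ⟨b', hb', hd'⟩
      · calc d ♯ c ≤ a' ♯ b ♯ c := nadd_le_nadd_right hd' c
          _ = a' ♯ (b ♯ c) := IHa a' ha' b c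
          _ < a ♯ (b ♯ c) := nadd_lt_nadd_right ha' _
      · calc d ♯ c ≤ a ♯ b' ♯ c := nadd_le_nadd_right hd' c
          _ = a ♯ (b' ♯ c) := IHb b' hb' c
          _ < a ♯ (b ♯ c) := nadd_lt_nadd_left (nadd_lt_nadd_right hb' c) a
    · intro c' hc'
      rw [IHc c' hc']
      exact nadd_lt_nadd_left (nadd_lt_nadd_left hc' b) a
  · rw [nadd_le_iff]; constructor
    · intro a' ha'
      rw [← IHa a' ha' b c]
      exact nadd_lt_nadd_right (nadd_lt_nadd_right ha' b) c
    · intro d hd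
      rcases lt_nadd_iff.1 hd with ⟨b', hb', hd'⟩ | ⟨c', hc', hd'⟩
      · calc a ♯ d ≤ a ♯ (b' ♯ c) := nadd_le_nadd_left hd' a
          _ = a ♯ b' ♯ c := (IHb b' hb' c).symm
          _ < a ♯ b ♯ c := nadd_lt_nadd_right (nadd_lt_nadd_left hb' a) c
      · calc a ♯ d ≤ a ♯ (b ♯ c') := nadd_le_nadd_left hd' a
          _ = a ♯ b ♯ c' := (IHc c' hc').symm
          _ < a ♯ b ♯ c := nadd_lt_nadd_left hc' _

theorem nadd_right_comm (a b c : Ordinal) : a ♯ b ♯ c = a ♯ c ♯ b := by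
  rw [nadd_assoc, nadd_comm b c, ← nadd_assoc]

theorem nadd_left_comm (a b c : Ordinal) : a ♯ (b ♯ c) = b ♯ (a ♯ c) := by
  rw [← nadd_assoc, nadd_comm a b, nadd_assoc]

theorem add_le_nadd (a b : Ordinal) : a + b ≤ a ♯ b := by
  induction b using Ordinal.limitRecOn with
  | zero => rw [add_zero, nadd_zero]
  | add_one b IH =>
    rw [← add_assoc, Order.add_one_le_iff]
    exact IH.trans_lt (nadd_lt_nadd_left (Order.lt_add_one_iff.2 le_rfl) a)
  | limit b hb IH =>
    rw [add_le_iff_of_isSuccLimit hb]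
    intro d hd
    exact (IH d hd).trans (nadd_le_nadd_left hd.le a)

theorem one_nadd (a : Ordinal) : 1 ♯ a = succ a := by
  rw [nadd_comm]
  induction a using WellFoundedLT.induction with
  | _ a IH =>
  apply le_antisymm
  · rw [nadd_le_iff]; constructor
    · intro a' ha'; rw [IH a' ha']; exact Order.succ_lt_succ ha'
    · intro c hc
      rw [Order.lt_one_iff] at hc; subst hc; rw [nadd_zero]; exact Order.lt_succ a
  · rw [Order.succ_le_iff]
    calc a = a ♯ 0 := (nadd_zero a).symm
      _ < a ♯ 1 := nadd_lt_nadd_left zero_lt_one a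

end NaddAux

open NaddAux

namespace Stmt11Aux

lemma dec (h : Ordinal) : ∀ i : ℕ, ∀ x : Ordinal, x < ω ^ h * (i + 1 : ℕ) →
    ∃ j : ℕ, j ≤ i ∧ ∃ r : Ordinal, r < ω ^ h ∧ x = ω ^ h * j + r := by
  intro i
  induction i with
  | zero =>
    intro x hx
    refine ⟨0, le_refl 0, x, ?_, by simp⟩
    simpa using hx
  | succ i IH =>
    intro x hx
    by_cases h' : x < ω ^ h * (i + 1 : ℕ)
    · obtain ⟨j, hj, r, hr, e⟩ := IH x h'
      exact ⟨j, hj.trans (Nat.le_succ i), r, hr, e⟩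
    · push_neg at h'
      refine ⟨i + 1, le_refl _, x - ω ^ h * (i + 1 : ℕ), ?_,
        (Ordinal.add_sub_cancel_of_le h').symm⟩
      rw [Ordinal.sub_lt_of_le h']
      have e : ω ^ h * ((i + 1 : ℕ) + 1 : ℕ) = ω ^ h * (i + 1 : ℕ) + ω ^ h := by
        push_cast
        rw [mul_add, mul_one]
      rw [← e]
      exact hx

section
variable {h : Ordinal} (ph : ∀ a b : Ordinal, a < ω ^ h → b < ω ^ h → a ♯ b < ω ^ h)
include ph

lemma h2 : ∀ i : ℕ, ∀ w : Ordinal, w < ω ^ h → ω ^ h * i ♯ w = ω ^ h * i + w := by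
  intro i
  induction i using Nat.strong_induction_on with
  | _ i IHi =>
    intro w
    induction w using Ordinal.induction with
    | h w IHw =>
      intro hw
      refine le_antisymm ?_ (add_le_nadd _ _)
      rw [nadd_le_iff]
      constructor
      · intro x hx
        match i, hx with
        | 0, hx => rw [Nat.cast_zero, mul_zero] at hx; exact absurd hx (not_lt_zero)
        | (i' + 1 : ℕ), hx =>
          obtain ⟨j, hj, r, hr, rfl⟩ := dec h i' x (by exact_mod_cast hx)
          have hrw : r ♯ w < ω ^ h := ph r w hr hw
          calc (ω ^ h * j + r) ♯ w ≤ (ω ^ h * j ♯ r) ♯ w :=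
                nadd_le_nadd_right (add_le_nadd _ _) w
            _ = ω ^ h * j ♯ (r ♯ w) := nadd_assoc _ _ _
            _ = ω ^ h * j + (r ♯ w) := IHi j (Nat.lt_succ_of_le hj) _ hrw
            _ < ω ^ h * j + ω ^ h := add_lt_add_right hrw _
            _ = ω ^ h * (j + 1 : ℕ) := by push_cast; rw [mul_add, mul_one]
            _ ≤ ω ^ h * (i' + 1 : ℕ) := by
                apply mul_le_mul_right
                exact_mod_cast Nat.cast_le.2 (Nat.succ_le_succ hj)
            _ ≤ ω ^ h * (i' + 1 : ℕ) + w := le_self_add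
      · intro w' hw'
        rw [IHw w' hw' (hw'.trans hw)]
        exact add_lt_add_right hw' _

lemma h4' : ∀ p : ℕ, ω ^ h * p ♯ ω ^ h = ω ^ h * (p + 1 : ℕ) := by
  intro p
  induction p using Nat.strong_induction_on with
  | _ p IHp =>
    have hsucc : ∀ q : ℕ, ω ^ h * (q + 1 : ℕ) = ω ^ h * q + ω ^ h := by
      intro q; push_cast; rw [mul_add, mul_one]
    refine le_antisymm ?_ (by rw [hsucc]; exact add_le_nadd _ _)
    rw [nadd_le_iff]
    constructor
    · intro x hx
      match p, hx with
      | 0, hx => rw [Nat.cast_zero, mul_zero] at hx; exact absurd hx (not_lt_zero)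
      | (p' + 1 : ℕ), hx =>
        obtain ⟨j, hj, r, hr, rfl⟩ := dec h p' x (by exact_mod_cast hx)
        calc (ω ^ h * j + r) ♯ ω ^ h ≤ (ω ^ h * j ♯ r) ♯ ω ^ h :=
              nadd_le_nadd_right (add_le_nadd _ _) _
          _ = (ω ^ h * j ♯ ω ^ h) ♯ r := nadd_right_comm _ _ _
          _ = ω ^ h * (j + 1 : ℕ) ♯ r := by rw [IHp j (Nat.lt_succ_of_le hj)]
          _ = ω ^ h * (j + 1 : ℕ) + r := h2 ph _ r hr
          _ < ω ^ h * (j + 1 : ℕ) + ω ^ h := add_lt_add_right hr _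
          _ = ω ^ h * (j + 2 : ℕ) := by rw [← hsucc (j+1)]
          _ ≤ ω ^ h * (p' + 1 + 1 : ℕ) := by
              apply mul_le_mul_right
              have : j + 2 ≤ p' + 1 + 1 := by omega
              exact_mod_cast Nat.cast_le.2 this
    · intro w hw
      rw [h2 ph p w hw, hsucc]
      exact add_lt_add_right hw _

lemma h4 : ∀ j l : ℕ, ω ^ h * j ♯ ω ^ h * l = ω ^ h * (j + l : ℕ) := by
  intro j l
  induction l with
  | zero => simp [nadd_zero]
  | succ l IH =>
    have e : ω ^ h * (l + 1 : ℕ) = ω ^ h * l ♯ ω ^ h := (h4' ph l).symm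
    rw [e, ← nadd_assoc, IH, h4' ph (j + l), Nat.add_assoc]

end

/-- `ω ^ e` is closed under natural addition. -/
lemma nadd_lt_omega0_opow : ∀ (e : Ordinal) {a b : Ordinal},
    a < ω ^ e → b < ω ^ e → a ♯ b < ω ^ e := by
  intro e
  induction e using Ordinal.limitRecOn with
  | zero =>
    intro a b ha hb
    rw [opow_zero, lt_one_iff_zero] at *
    subst ha; subst hb; simp [nadd_zero]
  | add_one h ph0 =>
    have ph : ∀ a b : Ordinal, a < ω ^ h → b < ω ^ h → a ♯ b < ω ^ h :=
      fun a b ha hb => ph0 ha hb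
    intro a b ha hb
    rw [opow_add_one] at *
    obtain ⟨ca, hca, ha⟩ := (lt_mul_iff_of_isSuccLimit isSuccLimit_omega0).1 ha
    obtain ⟨cb, hcb, hb⟩ := (lt_mul_iff_of_isSuccLimit isSuccLimit_omega0).1 hb
    obtain ⟨m, rfl⟩ := lt_omega0.1 hca
    obtain ⟨n, rfl⟩ := lt_omega0.1 hcb
    match m, ha with
    | 0, ha => rw [Nat.cast_zero, mul_zero] at ha; exact absurd ha (not_lt_zero)
    | (m' + 1 : ℕ), ha =>
      match n, hb with
      | 0, hb => rw [Nat.cast_zero, mul_zero] at hb; exact absurd hb (not_lt_zero)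
      | (n' + 1 : ℕ), hb =>
        obtain ⟨j, hj, r, hr, rfl⟩ := dec h m' a (by exact_mod_cast ha)
        obtain ⟨l, hl, s, hs, rfl⟩ := dec h n' b (by exact_mod_cast hb)
        have hrs : r ♯ s < ω ^ h := ph r s hr hs
        calc (ω ^ h * j + r) ♯ (ω ^ h * l + s)
            ≤ (ω ^ h * j ♯ r) ♯ (ω ^ h * l ♯ s) :=
              nadd_le_nadd (add_le_nadd _ _) (add_le_nadd _ _)
          _ = (ω ^ h * j ♯ ω ^ h * l) ♯ (r ♯ s) := by
              rw [nadd_assoc, nadd_assoc, nadd_left_comm r (ω ^ h * l) s]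
          _ = ω ^ h * (j + l : ℕ) ♯ (r ♯ s) := by rw [h4 ph]
          _ = ω ^ h * (j + l : ℕ) + (r ♯ s) := h2 ph _ _ hrs
          _ < ω ^ h * (j + l : ℕ) + ω ^ h := add_lt_add_right hrs _
          _ = ω ^ h * (j + l + 1 : ℕ) := by rw [Nat.cast_succ, mul_add_one]
          _ < ω ^ h * ω := (mul_lt_mul_iff_right₀ (opow_pos h omega0_pos)).2
              (nat_lt_omega0 _)
  | limit e he IHe =>
    intro a b ha hb
    obtain ⟨f, hf, ha⟩ := (lt_opow_of_isSuccLimit omega0_ne_zero he).1 ha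
    obtain ⟨f', hf', hb⟩ := (lt_opow_of_isSuccLimit omega0_ne_zero he).1 hb
    have hm : max f f' < e := max_lt hf hf'
    have hma : a < ω ^ max f f' :=
      ha.trans_le (opow_le_opow_right omega0_pos (le_max_left _ _))
    have hmb : b < ω ^ max f f' :=
      hb.trans_le (opow_le_opow_right omega0_pos (le_max_right _ _))
    exact (IHe _ hm hma hmb).trans_le (opow_le_opow_right omega0_pos hm.le)


/-! ### `hNil` machinery -/

universe u


theorem hNil_eq (k : ℕ) (α : Ordinal) :
    hNil.{u,u} k α = ⨆ β : Set.Iio α, nmulNat (hNil.{u,u} k β.1) k + 1 := by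
  rw [hNil]

lemma le_hNil {k : ℕ} {β α : Ordinal} (h : β < α) :
    nmulNat (hNil.{u,u} k β) k + 1 ≤ hNil.{u,u} k α := by
  conv_rhs => rw [hNil_eq]
  exact le_ciSup Ordinal.bddAbove_of_small (⟨β, h⟩ : Set.Iio α)

lemma hNil_le {k : ℕ} {α c : Ordinal} (H : ∀ β < α, nmulNat (hNil.{u,u} k β) k + 1 ≤ c) :
    hNil.{u,u} k α ≤ c := by
  conv_lhs => rw [hNil_eq]
  exact Ordinal.iSup_le fun β : Set.Iio α => H β.1 β.2

lemma hNil_mono {k : ℕ} : Monotone (hNil.{u,u} k) :=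
  fun _ _ h => hNil_le fun _ hγ => le_hNil (hγ.trans_le h)

lemma hNil_zero (k : ℕ) : hNil.{u,u} k 0 = 0 :=
  le_antisymm (hNil_le fun β hβ => absurd hβ (not_lt_zero)) zero_le

lemma nmulNat_mono_left {γ δ : Ordinal} (h : γ ≤ δ) : ∀ n, nmulNat γ n ≤ nmulNat δ n
  | 0 => le_refl _
  | n + 1 => nadd_le_nadd (nmulNat_mono_left h n) h

lemma nmulNat_mono_right (γ : Ordinal) : Monotone (nmulNat γ) :=
  monotone_nat_of_le_succ fun _ => le_self_nadd

lemma le_nmulNat (γ : Ordinal) {n : ℕ} (hn : 1 ≤ n) : γ ≤ nmulNat γ n := by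
  have h1 : nmulNat γ 1 = γ := by simp [nmulNat]
  calc γ = nmulNat γ 1 := h1.symm
    _ ≤ nmulNat γ n := nmulNat_mono_right γ hn

lemma nmulNat_lt_opow {γ e : Ordinal} (hγ : γ < ω ^ e) : ∀ n, nmulNat γ n < ω ^ e
  | 0 => by simpa [nmulNat] using opow_pos e omega0_pos
  | n + 1 => nadd_lt_omega0_opow e (nmulNat_lt_opow hγ n) hγ

lemma hNil_succ (k : ℕ) (β : Ordinal) : hNil.{u,u} k (succ β) = nmulNat (hNil.{u,u} k β) k + 1 := by
  apply le_antisymm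
  · exact hNil_le fun γ hγ =>
      add_le_add_left (nmulNat_mono_left (hNil_mono (lt_succ_iff.1 hγ)) k) 1
  · exact le_hNil (lt_succ β)

lemma one_add_le_add_one (x : Ordinal) : 1 + x ≤ x + 1 := by
  have h := add_le_nadd (1 : Ordinal) x
  rwa [one_nadd, ← add_one_eq_succ] at h

lemma mulTwo (x : Ordinal) : x * 2 = x + x := by
  rw [show (2 : Ordinal) = 1 + 1 by norm_num, mul_add, mul_one]

lemma two_nmul_le (x : Ordinal) {k : ℕ} (hk : 2 ≤ k) : x + x ≤ nmulNat x k := by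
  have h2 : nmulNat x 2 = x ♯ x := by simp [nmulNat]
  calc x + x ≤ x ♯ x := add_le_nadd x x
    _ = nmulNat x 2 := h2.symm
    _ ≤ nmulNat x k := nmulNat_mono_right x hk

lemma lb {k : ℕ} (hk : 2 ≤ k) : ∀ β : Ordinal, (2 : Ordinal) ^ β ≤ hNil.{u,u} k β + 1 := by
  intro β
  induction β using Ordinal.limitRecOn with
  | zero => rw [opow_zero]; simpa using add_le_add_left ((zero_le (a := hNil.{u,u} k 0))) 1
  | add_one β IH =>
    rw [← Order.succ_eq_add_one β, opow_succ, hNil_succ]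
    calc (2 : Ordinal) ^ β * 2 = 2 ^ β + 2 ^ β := mulTwo _
      _ ≤ (hNil.{u,u} k β + 1) + (hNil.{u,u} k β + 1) := add_le_add IH IH
      _ = hNil.{u,u} k β + ((1 + hNil.{u,u} k β) + 1) := by
          rw [add_assoc, ← add_assoc 1 (hNil.{u,u} k β) 1]
      _ ≤ hNil.{u,u} k β + ((hNil.{u,u} k β + 1) + 1) :=
          add_le_add_right (add_le_add_left (one_add_le_add_one _) 1) _
      _ = (hNil.{u,u} k β + hNil.{u,u} k β) + 1 + 1 := by rw [← add_assoc, ← add_assoc]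
      _ ≤ nmulNat (hNil.{u,u} k β) k + 1 + 1 :=
          add_le_add_left (add_le_add_left (two_nmul_le _ hk) 1) 1
  | limit β hβ IH =>
    rw [opow_le_of_isSuccLimit two_ne_zero hβ]
    intro γ hγ
    calc (2 : Ordinal) ^ γ ≤ hNil.{u,u} k γ + 1 := IH γ hγ
      _ ≤ nmulNat (hNil.{u,u} k γ) k + 1 := add_le_add_left (le_nmulNat _ (by omega)) 1
      _ ≤ hNil.{u,u} k β := le_hNil hγ
      _ ≤ hNil.{u,u} k β + 1 := le_self_add

lemma add_omega0_le' {α β : Ordinal} (hα : IsSuccLimit α) (h : β < α) : β + ω ≤ α := by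
  rw [add_le_iff_of_isSuccLimit isSuccLimit_omega0]
  intro c hc
  obtain ⟨n, rfl⟩ := lt_omega0.1 hc
  clear hc
  have hn : β + n < α := by
    induction n with
    | zero => simpa using h
    | succ n IHn =>
      have e : β + ((n : ℕ) + 1 : ℕ) = succ (β + n) := by
        rw [Nat.cast_succ, ← add_assoc, add_one_eq_succ]
      rw [e]
      exact hα.succ_lt IHn
  exact hn.le

lemma isLimit_opow_succ (g : Ordinal) : IsSuccLimit (ω ^ (g + 1)) := by
  rw [add_one_eq_succ, opow_succ]
  exact isSuccLimit_mul_right (opow_pos g omega0_pos) isSuccLimit_omega0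

lemma term_lt {k : ℕ} {β g : Ordinal} (h1 : hNil.{u,u} k β < ω ^ (g + 1)) :
    nmulNat (hNil.{u,u} k β) k + 1 < ω ^ (g + 1) := by
  have h2 := (isLimit_opow_succ g).succ_lt (nmulNat_lt_opow h1 k)
  rwa [← add_one_eq_succ] at h2

lemma two_opow_omega0 : (2 : Ordinal) ^ ω = ω := by
  have h : ((2 : ℕ) : Ordinal) ^ ω = ω := natCast_opow_omega0 (by norm_num)
  simpa using h

lemma omega0_opow_eq (x : Ordinal) : ω ^ x = (2 : Ordinal) ^ (ω * x) := by
  rw [opow_mul, two_opow_omega0]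

lemma ub {k : ℕ} : ∀ β : Ordinal, ∃ g, hNil.{u,u} k β < ω ^ (g + 1) ∧ ω * (g + 1) ≤ β + ω := by
  intro β
  induction β using Ordinal.limitRecOn with
  | zero =>
    refine ⟨0, ?_, by simp⟩
    rw [hNil_zero]
    exact opow_pos _ omega0_pos
  | add_one β IH =>
    rw [← Order.succ_eq_add_one β]
    obtain ⟨g, h1, h2⟩ := IH
    refine ⟨g, ?_, ?_⟩
    · rw [hNil_succ]; exact term_lt h1
    · calc ω * (g + 1) ≤ β + ω := h2
        _ = succ β + ω := by rw [← add_one_eq_succ, add_assoc, one_add_omega0]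
  | limit β hβ IH =>
    obtain ⟨q, rfl⟩ : ω ∣ β := (isSuccLimit_iff_omega0_dvd.1 hβ).2
    refine ⟨q, ?_, by rw [mul_add_one]⟩
    have hle : hNil.{u,u} k (ω * q) ≤ (2 : Ordinal) ^ (ω * q) := by
      apply hNil_le
      intro γ hγ
      obtain ⟨g, h1, h2⟩ := IH γ hγ
      have h3 : ω * (g + 1) ≤ ω * q := h2.trans (add_omega0_le' hβ hγ)
      calc nmulNat (hNil.{u,u} k γ) k + 1 ≤ ω ^ (g + 1) := (term_lt h1).le
        _ = (2 : Ordinal) ^ (ω * (g + 1)) := omega0_opow_eq _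
        _ ≤ (2 : Ordinal) ^ (ω * q) := opow_le_opow_right two_pos h3
    calc hNil.{u,u} k (ω * q) ≤ (2 : Ordinal) ^ (ω * q) := hle
      _ = ω ^ q := (omega0_opow_eq q).symm
      _ < ω ^ (q + 1) := by
          rw [add_one_eq_succ]
          exact (opow_lt_opow_iff_right one_lt_omega0).2 (lt_succ q)

end Stmt11Aux

open Stmt11Aux in
/-- for `k ≥ 2` and every limit ordinal `α`, `hNil k α = 2^α`
(ordinal exponentiation), i.e. the ordinal height of the set of finite `k`-branching trees
with strictly decreasing ordinal labels `< α` under one-step extension is `2^α`. -/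
theorem stmt_11 (k : ℕ) (hk : 2 ≤ k) (α : Ordinal) (hα : Order.IsSuccLimit α) :
    hNil k α = (2 : Ordinal) ^ α := by
  apply le_antisymm
  · apply hNil_le
    intro β hβ
    obtain ⟨g, h1, h2⟩ := ub (k := k) β
    calc nmulNat (hNil k β) k + 1 ≤ ω ^ (g + 1) := (term_lt h1).le
      _ = (2 : Ordinal) ^ (ω * (g + 1)) := omega0_opow_eq _
      _ ≤ (2 : Ordinal) ^ α := opow_le_opow_right two_pos (h2.trans (add_omega0_le' hα hβ))
  · rw [opow_le_of_isSuccLimit two_ne_zero hα]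
    intro γ hγ
    calc (2 : Ordinal) ^ γ ≤ hNil k γ + 1 := lb hk γ
      _ ≤ nmulNat (hNil k γ) k + 1 := add_le_add_left (le_nmulNat _ (by omega)) 1
      _ ≤ hNil k α := le_hNil hγ
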